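/- Every coloring of the edges of the complete tripartite graph K_17^3 (three parts, each of size 17) with 5 colors contains a monochromatic cycle C_4; equivalently, r_3(C_4,5) ≤ 17. -/

import Mathlib

set_option maxRecDepth 40000

/-- The complete multipartite graph with `p` parts, each of size `n`:
vertices are pairs `(part, index)`, adjacent iff they lie in different parts. -/
def completeMultipartite (p n : ℕ) : SimpleGraph (Fin p × Fin n) where
  Adj v w := v.1 ≠ w.1
  symm := ⟨fun _ _ h => h.symm⟩
  loopless := ⟨fun _ h => h rfl⟩

instance (p n : ℕ) : DecidableRel (completeMultipartite p n).Adj :=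
  fun v w => inferInstanceAs (Decidable (v.1 ≠ w.1))

/-- The edge coloring `c` contains a monochromatic cycle `C₄` in the graph `G`. -/
def HasMonoC4 {V : Type*} (G : SimpleGraph V) {k : ℕ} (c : Sym2 V → Fin k) : Prop :=
  ∃ v₁ v₂ v₃ v₄ : V,
    v₁ ≠ v₂ ∧ v₁ ≠ v₃ ∧ v₁ ≠ v₄ ∧ v₂ ≠ v₃ ∧ v₂ ≠ v₄ ∧ v₃ ≠ v₄ ∧
    G.Adj v₁ v₂ ∧ G.Adj v₂ v₃ ∧ G.Adj v₃ v₄ ∧ G.Adj v₄ v₁ ∧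
    c s(v₁, v₂) = c s(v₂, v₃) ∧ c s(v₂, v₃) = c s(v₃, v₄) ∧ c s(v₃, v₄) = c s(v₄, v₁)

/-- The `p`-partite Ramsey number `r_p(C₄, k)`: the least positive `n` such that every
`k`-coloring of the edges of `K_n^p` contains a monochromatic `C₄`. -/
noncomputable def multipartiteRamsey (p k : ℕ) : ℕ :=
  sInf {n : ℕ | 0 < n ∧
    ∀ c : Sym2 (Fin p × Fin n) → Fin k, HasMonoC4 (completeMultipartite p n) c}

namespace TripRamseyAux

open Finset

abbrev V3 := Fin 3 × Fin 17

/-- color-`i` neighbours of `v` in part `b` -/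
def NB (c : Sym2 V3 → Fin 5) (v : V3) (b : Fin 3) (i : Fin 5) : Finset V3 :=
  univ.filter (fun x => x.1 = b ∧ c s(v, x) = i)

/-- monochromatic cherries: (v, x, y) with x, y distinct, in the same part (different
from v's part), and the edges vx, vy of the same color. -/
def SC (c : Sym2 V3 → Fin 5) : Finset (V3 × V3 × V3) :=
  univ.filter (fun p => p.2.1.1 = p.2.2.1 ∧ p.2.1 ≠ p.2.2 ∧ p.1.1 ≠ p.2.1.1 ∧
    c s(p.1, p.2.1) = c s(p.1, p.2.2))

lemma nat_le_sq (a : ℕ) : a ≤ a * a := by nlinarith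

lemma sum5_lb (d : Fin 5 → ℕ) (h : ∑ i, d i = 17) :
    41 ≤ ∑ i, (d i * d i - d i) := by
  rw [Fin.sum_univ_five] at h ⊢
  set a := d 0; set b := d 1; set e := d 2; set f := d 3; set g := d 4
  have hsq : 58 ≤ a*a + b*b + e*e + f*f + g*g := by
    have h5 : 289 ≤ 5 * (a*a + b*b + e*e + f*f + g*g) := by
      nlinarith [sq_nonneg ((a:ℤ)-b), sq_nonneg ((a:ℤ)-e), sq_nonneg ((a:ℤ)-f),
        sq_nonneg ((a:ℤ)-g), sq_nonneg ((b:ℤ)-e), sq_nonneg ((b:ℤ)-f), sq_nonneg ((b:ℤ)-g),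
        sq_nonneg ((e:ℤ)-f), sq_nonneg ((e:ℤ)-g), sq_nonneg ((f:ℤ)-g)]
    omega
  have h1 := nat_le_sq a; have h2 := nat_le_sq b; have h3 := nat_le_sq e
  have h4 := nat_le_sq f; have h5 := nat_le_sq g
  generalize a*a = A at *; generalize b*b = B at *; generalize e*e = E at *
  generalize f*f = F at *; generalize g*g = G at *
  omega

/-- Upper bound on the number of cherries, assuming no monochromatic C4. -/
lemma SC_upper (c : Sym2 V3 → Fin 5)
    (hc : ¬ HasMonoC4 (completeMultipartite 3 17) c) : (SC c).card ≤ 4080 := by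
  classical
  have hinj : Set.InjOn (fun p : V3 × V3 × V3 => (c s(p.1, p.2.1), p.2.1, p.2.2))
      ↑(SC c) := by
    rintro ⟨v, x, y⟩ hp ⟨w, x', y'⟩ hq heq
    simp only [SC, coe_filter, Set.mem_setOf_eq, mem_univ, true_and] at hp hq
    simp only [Prod.mk.injEq] at heq
    obtain ⟨hcol, hx, hy⟩ := heq
    subst hx; subst hy
    by_cases hvw : v = w
    · subst hvw; rfl
    · exfalso
      apply hc
      obtain ⟨hxy1, hxy2, hvx, hcv⟩ := hp
      obtain ⟨_, _, hwx, hcw⟩ := hq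
      refine ⟨v, x, w, y, ?_, hvw, ?_, ?_, hxy2, ?_, hvx, ?_, ?_, ?_, ?_, ?_, ?_⟩
      · rintro rfl; exact hvx rfl
      · rintro rfl; exact hvx hxy1.symm
      · rintro rfl; exact hwx rfl
      · rintro rfl; exact hwx hxy1.symm
      · exact fun h => hwx h.symm
      · exact fun h : w.1 = y.1 => hwx (h.trans hxy1.symm)
      · intro h; exact hvx (hxy1.trans h).symm
      · rw [Sym2.eq_swap (a := x) (b := w)]; exact hcol
      · rw [Sym2.eq_swap (a := x) (b := w)]; exact hcol ▸ hcw
      · rw [Sym2.eq_swap (a := y) (b := v)]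
        exact hcw.symm.trans (hcol.symm.trans hcv)
  have hle := Finset.card_le_card_of_injOn
    (t := (univ : Finset (Fin 5)) ×ˢ
      (univ.filter (fun q : V3 × V3 => q.1.1 = q.2.1 ∧ q.1 ≠ q.2)))
    (fun p : V3 × V3 × V3 => (c s(p.1, p.2.1), p.2.1, p.2.2))
    (fun p hp => by
      simp only [SC, mem_coe, mem_filter, mem_univ, true_and] at hp
      simp only [mem_coe, mem_product, mem_univ, true_and, mem_filter]
      exact ⟨hp.1, hp.2.1⟩) hinj
  set_option maxRecDepth 20000 in
  have h816 : (univ.filter (fun q : V3 × V3 => q.1.1 = q.2.1 ∧ q.1 ≠ q.2)).card = 816 := by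
    decide
  rw [card_product, h816, Finset.card_univ, Fintype.card_fin] at hle
  exact hle

lemma row_sum (c : Sym2 V3 → Fin 5) (v : V3) (b : Fin 3) :
    ∑ i, (NB c v b i).card = 17 := by
  classical
  have h := Finset.card_eq_sum_card_fiberwise
    (s := univ.filter (fun x : V3 => x.1 = b)) (t := (univ : Finset (Fin 5)))
    (f := fun x => c s(v, x)) (fun x _ => mem_univ _)
  have hb : (univ.filter (fun x : V3 => x.1 = b)).card = 17 := by
    fin_cases b <;> decide
  rw [hb] at h
  calc ∑ i, (NB c v b i).card
      = ∑ i : Fin 5,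
        ((univ.filter (fun x : V3 => x.1 = b)).filter (fun x => c s(v, x) = i)).card := by
        refine Finset.sum_congr rfl (fun i _ => ?_)
        rw [NB, filter_filter]
    _ = 17 := h.symm

lemma fiber_card (c : Sym2 V3 → Fin 5) (v : V3) (b : Fin 3) (i : Fin 5) :
    ((SC c).filter (fun p => (p.1, p.2.1.1, c s(p.1, p.2.1)) = (v, b, i))).card
      = if b = v.1 then 0
        else (NB c v b i).card * (NB c v b i).card - (NB c v b i).card := by
  classical
  split_ifs with hb
  · rw [card_eq_zero, eq_empty_iff_forall_notMem]
    rintro ⟨w, x, y⟩ hm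
    simp only [mem_filter, SC, mem_univ, true_and, Prod.mk.injEq] at hm
    obtain ⟨⟨_, _, hvx, _⟩, hw, hx1, _⟩ := hm
    exact hvx (hw ▸ (hb ▸ hx1.symm))
  · rw [← Finset.offDiag_card]
    refine Finset.card_nbij' (fun p => (p.2.1, p.2.2)) (fun q => (v, q.1, q.2)) ?_ ?_ ?_ ?_
    · rintro ⟨w, x, y⟩ hm
      simp only [mem_coe, mem_filter, SC, mem_univ, true_and, Prod.mk.injEq] at hm
      obtain ⟨⟨hxy1, hxy2, hvx, hcv⟩, hw, hx1, hci⟩ := hm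
      subst hw
      simp only [mem_coe, Finset.mem_offDiag, NB, mem_filter, mem_univ, true_and]
      exact ⟨⟨hx1, hci⟩, ⟨hxy1.symm.trans hx1, (hcv.symm.trans hci : _)⟩, hxy2⟩
    · rintro ⟨x, y⟩ hm
      simp only [mem_coe, Finset.mem_offDiag, NB, mem_filter, mem_univ, true_and] at hm
      obtain ⟨⟨hx1, hxi⟩, ⟨hy1, hyi⟩, hxy⟩ := hm
      simp only [mem_coe, mem_filter, SC, mem_univ, true_and, Prod.mk.injEq]
      exact ⟨⟨hx1.trans hy1.symm, hxy, fun h => hb (hx1 ▸ h).symm,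
        hxi.trans hyi.symm⟩, hx1, hxi⟩
    · rintro ⟨w, x, y⟩ hm
      simp only [mem_coe, mem_filter, SC, mem_univ, true_and, Prod.mk.injEq] at hm
      simp [hm.2.1]
    · rintro ⟨x, y⟩ _; rfl

lemma SC_lower (c : Sym2 V3 → Fin 5) : 4182 ≤ (SC c).card := by
  classical
  rw [Finset.card_eq_sum_card_fiberwise
    (f := fun p : V3 × V3 × V3 => (p.1, p.2.1.1, c s(p.1, p.2.1)))
    (t := (univ : Finset (V3 × Fin 3 × Fin 5))) (fun p _ => mem_univ _)]
  rw [Fintype.sum_prod_type]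
  have hv : ∀ v : V3, 82 ≤ ∑ t : Fin 3 × Fin 5,
      ((SC c).filter (fun p => (p.1, p.2.1.1, c s(p.1, p.2.1)) = (v, t.1, t.2))).card := by
    intro v
    have hfc : ∀ t : Fin 3 × Fin 5,
        ((SC c).filter (fun p => (p.1, p.2.1.1, c s(p.1, p.2.1)) = (v, t.1, t.2))).card
        = if t.1 = v.1 then 0
          else (NB c v t.1 t.2).card * (NB c v t.1 t.2).card - (NB c v t.1 t.2).card :=
      fun t => fiber_card c v t.1 t.2
    rw [Finset.sum_congr rfl (fun t _ => hfc t)]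
    rw [Fintype.sum_prod_type]
    dsimp only
    rw [Fin.sum_univ_three]
    have key : ∀ b : Fin 3, b ≠ v.1 → 41 ≤ ∑ i : Fin 5,
        (if b = v.1 then 0
          else (NB c v b i).card * (NB c v b i).card - (NB c v b i).card) := by
      intro b hbv
      simp only [if_neg hbv]
      exact sum5_lb (fun i => (NB c v b i).card) (row_sum c v b)
    have hzero : ∀ b : Fin 3, b = v.1 → (0:ℕ) ≤ ∑ i : Fin 5,
        (if b = v.1 then 0
          else (NB c v b i).card * (NB c v b i).card - (NB c v b i).card) :=
      fun _ _ => Nat.zero_le _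
    have hv1 : v.1 = 0 ∨ v.1 = 1 ∨ v.1 = 2 := by omega
    rcases hv1 with h0 | h0 | h0
    · have h1 := key 1 (by rw [h0]; decide); have h2 := key 2 (by rw [h0]; decide); omega
    · have h1 := key 0 (by rw [h0]; decide); have h2 := key 2 (by rw [h0]; decide); omega
    · have h1 := key 0 (by rw [h0]; decide); have h2 := key 1 (by rw [h0]; decide); omega
  calc (4182 : ℕ) = (univ : Finset V3).card * 82 := by simp
    _ ≤ ∑ v : V3, ∑ t : Fin 3 × Fin 5,
        ((SC c).filter (fun p => (p.1, p.2.1.1, c s(p.1, p.2.1)) = (v, t.1, t.2))).card := by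
        rw [← smul_eq_mul]
        exact Finset.card_nsmul_le_sum _ _ _ (fun v _ => hv v)
    _ = _ := by
        refine Finset.sum_congr rfl (fun v _ => Finset.sum_congr rfl (fun t _ => ?_))
        rfl

lemma main_coloring (c : Sym2 V3 → Fin 5) : HasMonoC4 (completeMultipartite 3 17) c := by
  by_contra hc
  have h1 := SC_upper c hc
  have h2 := SC_lower c
  omega

end TripRamseyAux

/-- Every 5-coloring of the edges of `K_17^3` contains a monochromatic `C₄`;
equivalently, `r₃(C₄, 5) ≤ 17`. -/
theorem tripartiteRamsey_five_colors_le :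
    (∀ c : Sym2 (Fin 3 × Fin 17) → Fin 5, HasMonoC4 (completeMultipartite 3 17) c) ∧
      multipartiteRamsey 3 5 ≤ 17 := by
  exact ⟨TripRamseyAux.main_coloring,
    Nat.sInf_le ⟨by norm_num, TripRamseyAux.main_coloring⟩⟩
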